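/- arXiv:2010.09083 — 2 statements merged into one kernel-verified Lean document; each statement's English description precedes it below -/
import Mathlib

section
/- Fix α ≥ 1 and let f_α(x) = Σ_{l=0}^∞ 1{l < (1-x)/(2x)} · [((2l+2)/(1+x))^α − ((2l)/(1-x))^α] for x ∈ (0,1). Then lim_{x→0+} (α+1)·x^α·f_α(x) = 1. -/
open Real Filter Set

private lemma aux_rpow_bounds (p : ℝ) (hp : 0 ≤ p) (a : ℝ) (ha : 0 ≤ a) :
    (p+1) * a ^ p ≤ (a+1) ^ (p+1) - a ^ (p+1) ∧
      (a+1) ^ (p+1) - a ^ (p+1) ≤ (p+1) * (a+1) ^ p := by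
  have hp1 : (0:ℝ) < p + 1 := by linarith
  have hI : ∫ x in a..(a+1), x ^ p = ((a+1) ^ (p+1) - a ^ (p+1)) / (p+1) :=
    integral_rpow (Or.inl (by linarith))
  have hint : IntervalIntegrable (fun x : ℝ => x ^ p) MeasureTheory.volume a (a+1) :=
    intervalIntegral.intervalIntegrable_rpow (Or.inl hp)
  have h1 : a ^ p ≤ ∫ x in a..(a+1), x ^ p := by
    have := intervalIntegral.integral_mono_on (by linarith : a ≤ a+1)
      intervalIntegrable_const hint (fun x hx => Real.rpow_le_rpow ha hx.1 hp)
    simpa using this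
  have h2 : (∫ x in a..(a+1), x ^ p) ≤ (a+1) ^ p := by
    have := intervalIntegral.integral_mono_on (by linarith : a ≤ a+1)
      hint intervalIntegrable_const (fun x hx => Real.rpow_le_rpow (le_trans ha hx.1) hx.2 hp)
    simpa using this
  rw [hI] at h1 h2
  constructor
  · rw [le_div_iff₀ hp1] at h1; linarith
  · rw [div_le_iff₀ hp1] at h2; linarith

private lemma aux_sum_bounds (p : ℝ) (hp : 0 ≤ p) (n : ℕ) :
    (n:ℝ) ^ (p+1) ≤ (p+1) * ∑ k ∈ Finset.range n, ((k:ℝ)+1) ^ p ∧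
      (p+1) * ∑ k ∈ Finset.range n, ((k:ℝ)+1) ^ p ≤ ((n:ℝ)+1) ^ (p+1) := by
  have hp1 : p + 1 ≠ 0 := by positivity
  constructor
  · calc (n:ℝ)^(p+1)
        = ∑ k ∈ Finset.range n, (((k+1:ℕ):ℝ)^(p+1) - ((k:ℕ):ℝ)^(p+1)) := by
          rw [Finset.sum_range_sub (fun i : ℕ => ((i:ℕ):ℝ)^(p+1))]
          simp [Real.zero_rpow hp1]
      _ ≤ ∑ k ∈ Finset.range n, (p+1)*((k:ℝ)+1)^p := by
          refine Finset.sum_le_sum fun k _ => ?_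
          have := (aux_rpow_bounds p hp k (Nat.cast_nonneg k)).2
          push_cast
          linarith
      _ = (p+1) * ∑ k ∈ Finset.range n, ((k:ℝ)+1)^p := (Finset.mul_sum _ _ _).symm
  · calc (p+1) * ∑ k ∈ Finset.range n, ((k:ℝ)+1)^p
        = ∑ k ∈ Finset.range n, (p+1)*((k:ℝ)+1)^p := Finset.mul_sum _ _ _
      _ ≤ ∑ k ∈ Finset.range n, ((((k+1)+1:ℕ):ℝ)^(p+1) - (((k+1):ℕ):ℝ)^(p+1)) := by
          refine Finset.sum_le_sum fun k _ => ?_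
          have := (aux_rpow_bounds p hp ((k:ℝ)+1) (by positivity)).1
          push_cast
          linarith
      _ = ((n+1:ℕ):ℝ)^(p+1) - ((0+1:ℕ):ℝ)^(p+1) :=
          Finset.sum_range_sub (fun i : ℕ => ((i+1:ℕ):ℝ)^(p+1)) n
      _ ≤ ((n:ℝ)+1)^(p+1) := by
          push_cast
          simp [Real.one_rpow]

private lemma aux_deriv (α : ℝ) (hα : 1 ≤ α) :
    Tendsto (fun x : ℝ => ((1-x) ^ (-α) - (1+x) ^ (-α)) / x)
      (nhdsWithin 0 (Set.Ioi 0)) (nhds (2*α)) := by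
  have h1 : HasDerivAt (fun x : ℝ => (1-x) ^ (-α)) α 0 := by
    have hb : HasDerivAt (fun x : ℝ => 1 - x) (-1) 0 := (hasDerivAt_id 0).const_sub 1
    have hr : HasDerivAt (fun y : ℝ => y ^ (-α)) ((-α) * (1:ℝ) ^ (-α - 1)) ((1:ℝ) - 0) := by
      simpa using Real.hasDerivAt_rpow_const (p := -α) (x := (1:ℝ)) (Or.inl one_ne_zero)
    have := hr.comp 0 hb
    simpa [Real.one_rpow, Function.comp_def] using this
  have h2 : HasDerivAt (fun x : ℝ => (1+x) ^ (-α)) (-α) 0 := by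
    have hb : HasDerivAt (fun x : ℝ => 1 + x) 1 0 := (hasDerivAt_id 0).const_add 1
    have hr : HasDerivAt (fun y : ℝ => y ^ (-α)) ((-α) * (1:ℝ) ^ (-α - 1)) ((1:ℝ) + 0) := by
      simpa using Real.hasDerivAt_rpow_const (p := -α) (x := (1:ℝ)) (Or.inl one_ne_zero)
    have := hr.comp 0 hb
    simpa [Real.one_rpow, Function.comp_def] using this
  have h := (h1.sub h2)
  rw [hasDerivAt_iff_tendsto_slope] at h
  have h' := h.mono_left (nhdsWithin_mono 0 (fun y hy => by
    simp only [Set.mem_compl_iff, Set.mem_singleton_iff]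
    exact ne_of_gt hy))
  have : (fun x : ℝ => ((1-x) ^ (-α) - (1+x) ^ (-α)) / x)
      = slope (fun x : ℝ => (1-x) ^ (-α) - (1+x) ^ (-α)) 0 := by
    funext x
    simp [slope_def_field, Real.one_rpow]
  rw [this]
  rw [show (2:ℝ)*α = α - -α by ring]
  exact h'

private noncomputable def auxM (x : ℝ) : ℕ := ⌈(1-x)/(2*x)⌉₊
private noncomputable def auxS (α : ℝ) (n : ℕ) : ℝ := ∑ k ∈ Finset.range n, ((k:ℝ)+1)^α
private noncomputable def auxA (α x : ℝ) : ℝ := (α+1) * ((2*x*(auxM x:ℝ))^α * (1+x)^(-α))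
private noncomputable def auxD (α x : ℝ) : ℝ := (1-x)^(-α) - (1+x)^(-α)
private noncomputable def auxT (α x : ℝ) : ℝ := (α+1) * 2^α * x^α * auxS α (auxM x - 1)

private lemma aux_Mfacts {x : ℝ} (hx : x ∈ Set.Ioo (0:ℝ) (1/4)) :
    1 - x ≤ 2*x*(auxM x:ℝ) ∧ 2*x*(auxM x:ℝ) ≤ 1+x ∧ 2 ≤ auxM x := by
  obtain ⟨hx0, hx4⟩ := hx
  have h2x : (0:ℝ) < 2*x := by linarith
  have h1x : (0:ℝ) < 1 - x := by linarith
  have ht : (0:ℝ) < (1-x)/(2*x) := div_pos h1x h2x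
  have hle := Nat.le_ceil ((1-x)/(2*x))
  have hlt := Nat.ceil_lt_add_one ht.le
  refine ⟨?_, ?_, ?_⟩
  · rw [div_le_iff₀ h2x] at hle
    unfold auxM
    nlinarith [hle]
  · unfold auxM
    have h3 := mul_lt_mul_of_pos_right hlt h2x
    have h2 : (1-x)/(2*x)*(2*x) = 1-x := div_mul_cancel₀ _ h2x.ne'
    rw [add_mul, h2, one_mul] at h3
    nlinarith [h3]
  · have h1 : (1:ℝ) < (1-x)/(2*x) := by rw [lt_div_iff₀ h2x]; linarith
    have : 1 < auxM x := Nat.lt_ceil.mpr (by exact_mod_cast h1)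
    omega

private lemma aux_key {α x : ℝ} (hα : 1 ≤ α) (hx : x ∈ Set.Ioo (0:ℝ) (1/4))
    (hM2 : 2 ≤ auxM x) :
    (α+1) * x^α * (∑' l : ℕ,
      if (l : ℝ) < (1 - x) / (2 * x)
      then ((2 * (l : ℝ) + 2) / (1 + x)) ^ α - ((2 * (l : ℝ)) / (1 - x)) ^ α
      else 0) = auxA α x - auxD α x * auxT α x := by
  obtain ⟨hx0, hx4⟩ := hx
  have hα0 : (0:ℝ) < α := by linarith
  have hαne : α ≠ 0 := ne_of_gt hα0
  have h1x : (0:ℝ) < 1 - x := by linarith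
  have h1p : (0:ℝ) < 1 + x := by linarith
  have hsum : (∑' l : ℕ,
      if (l : ℝ) < (1 - x) / (2 * x)
      then ((2 * (l : ℝ) + 2) / (1 + x)) ^ α - ((2 * (l : ℝ)) / (1 - x)) ^ α
      else 0) = ∑ l ∈ Finset.range (auxM x),
        (((2*(l:ℝ)+2)/(1+x))^α - ((2*(l:ℝ))/(1-x))^α) := by
    rw [tsum_eq_sum (s := Finset.range (auxM x))
      (fun l hl => if_neg (fun hcon => hl (Finset.mem_range.mpr (Nat.lt_ceil.mpr hcon))))]
    exact Finset.sum_congr rfl fun l hl =>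
      if_pos (Nat.lt_ceil.mp (Finset.mem_range.mp hl))
  have hA1 : ∀ l : ℕ, ((2*(l:ℝ)+2)/(1+x))^α = 2^α * ((l:ℝ)+1)^α * (1+x)^(-α) := by
    intro l
    rw [Real.rpow_neg h1p.le, Real.div_rpow (by positivity) h1p.le,
      show 2*(l:ℝ)+2 = 2*((l:ℝ)+1) by ring,
      Real.mul_rpow (by norm_num) (by positivity)]
    ring
  have hA2 : ∀ l : ℕ, ((2*(l:ℝ))/(1-x))^α = 2^α * ((l:ℝ))^α * (1-x)^(-α) := by
    intro l
    rw [Real.rpow_neg h1x.le, Real.div_rpow (by positivity) h1x.le,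
      Real.mul_rpow (by norm_num) (Nat.cast_nonneg l)]
    ring
  obtain ⟨m, hm⟩ : ∃ m, auxM x = m + 1 := ⟨auxM x - 1, by omega⟩
  have hm' : auxM x - 1 = m := by omega
  have hS1 : ∑ l ∈ Finset.range (auxM x), ((l:ℝ)+1)^α
      = auxS α (auxM x - 1) + ((auxM x:ℝ))^α := by
    rw [hm, Nat.add_sub_cancel, Finset.sum_range_succ]
    unfold auxS
    push_cast
    ring
  have hS2 : ∑ l ∈ Finset.range (auxM x), ((l:ℝ))^α = auxS α (auxM x - 1) := by
    rw [hm, Nat.add_sub_cancel, Finset.sum_range_succ']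
    unfold auxS
    rw [Nat.cast_zero, Real.zero_rpow hαne, add_zero]
    push_cast
    rfl
  have hmulr : (2*x*(auxM x:ℝ))^α = 2^α * x^α * (auxM x:ℝ)^α := by
    rw [Real.mul_rpow (by positivity) (Nat.cast_nonneg _),
      Real.mul_rpow (by norm_num) hx0.le]
  have hfx : (∑ l ∈ Finset.range (auxM x),
        (((2*(l:ℝ)+2)/(1+x))^α - ((2*(l:ℝ))/(1-x))^α))
      = 2^α * (1+x)^(-α) * (auxS α (auxM x - 1) + (auxM x:ℝ)^α)
        - 2^α * (1-x)^(-α) * auxS α (auxM x - 1) := by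
    rw [Finset.sum_sub_distrib,
      show (∑ l ∈ Finset.range (auxM x), ((2*(l:ℝ)+2)/(1+x))^α)
        = ∑ l ∈ Finset.range (auxM x), 2^α * ((l:ℝ)+1)^α * (1+x)^(-α) from
        Finset.sum_congr rfl fun l _ => hA1 l,
      show (∑ l ∈ Finset.range (auxM x), ((2*(l:ℝ))/(1-x))^α)
        = ∑ l ∈ Finset.range (auxM x), 2^α * ((l:ℝ))^α * (1-x)^(-α) from
        Finset.sum_congr rfl fun l _ => hA2 l]
    rw [← Finset.sum_mul, ← Finset.sum_mul, ← Finset.mul_sum, ← Finset.mul_sum, hS1, hS2]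
    ring
  rw [hsum, hfx]
  unfold auxA auxD auxT
  rw [hmulr]
  ring

private lemma aux_Abounds {α x : ℝ} (hα : 1 ≤ α) (hx : x ∈ Set.Ioo (0:ℝ) (1/4)) :
    (α+1) * ((1-x)^α * (1+x)^(-α)) ≤ auxA α x ∧ auxA α x ≤ α + 1 := by
  obtain ⟨hg1, hg2, hM2⟩ := aux_Mfacts hx
  obtain ⟨hx0, hx4⟩ := hx
  have hα0 : (0:ℝ) < α := by linarith
  have h1x : (0:ℝ) < 1 - x := by linarith
  have h1p : (0:ℝ) < 1 + x := by linarith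
  have hpn : (0:ℝ) ≤ (1+x)^(-α) := Real.rpow_nonneg h1p.le _
  constructor
  · unfold auxA
    have hle : (1-x)^α ≤ (2*x*(auxM x:ℝ))^α := Real.rpow_le_rpow h1x.le hg1 hα0.le
    exact mul_le_mul_of_nonneg_left (mul_le_mul_of_nonneg_right hle hpn) (by linarith)
  · unfold auxA
    have hle : (2*x*(auxM x:ℝ))^α ≤ (1+x)^α := Real.rpow_le_rpow (by positivity) hg2 hα0.le
    calc (α+1) * ((2*x*(auxM x:ℝ))^α * (1+x)^(-α))
        ≤ (α+1) * ((1+x)^α * (1+x)^(-α)) :=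
          mul_le_mul_of_nonneg_left (mul_le_mul_of_nonneg_right hle hpn) (by linarith)
      _ = α + 1 := by
          rw [← Real.rpow_add h1p, show α + -α = 0 by ring, Real.rpow_zero, mul_one]

private lemma aux_Dnn {α x : ℝ} (hα : 1 ≤ α) (hx : x ∈ Set.Ioo (0:ℝ) (1/4)) :
    0 ≤ auxD α x := by
  obtain ⟨hx0, hx4⟩ := hx
  have h1x : (0:ℝ) < 1 - x := by linarith
  unfold auxD
  have := Real.rpow_le_rpow_of_nonpos h1x (by linarith : 1 - x ≤ 1 + x)
    (by linarith : -α ≤ 0)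
  linarith

private lemma aux_Tbounds {α x : ℝ} (hα : 1 ≤ α) (hx : x ∈ Set.Ioo (0:ℝ) (1/4)) :
    (1-3*x)^(α+1)/(2*x) ≤ auxT α x ∧ auxT α x ≤ (1+x)^(α+1)/(2*x) := by
  obtain ⟨hg1, hg2, hM2⟩ := aux_Mfacts hx
  obtain ⟨hx0, hx4⟩ := hx
  have hα0 : (0:ℝ) < α := by linarith
  have h1p : (0:ℝ) < 1 + x := by linarith
  have h13 : (0:ℝ) < 1 - 3*x := by linarith
  have hMR : (2:ℝ) ≤ (auxM x : ℝ) := by exact_mod_cast hM2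
  have hMpos : (0:ℝ) < (auxM x : ℝ) := by linarith
  have hcast : ((auxM x - 1 : ℕ):ℝ) = (auxM x:ℝ) - 1 := by
    have h1 : 1 ≤ auxM x := by omega
    push_cast [h1]
    ring
  have hsb := aux_sum_bounds α hα0.le (auxM x - 1)
  rw [hcast] at hsb
  have hsb1 : ((auxM x:ℝ)-1)^(α+1) ≤ (α+1) * auxS α (auxM x - 1) := hsb.1
  have hsb2 : (α+1) * auxS α (auxM x - 1) ≤ (auxM x:ℝ)^(α+1) := by
    have := hsb.2
    rw [sub_add_cancel] at this
    exact this
  constructor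
  · have hc1 : 1-3*x ≤ 2*x*((auxM x:ℝ)-1) := by nlinarith [hg1]
    have hc2 : (1-3*x)/(2*x) ≤ (auxM x:ℝ)-1 := by
      rw [div_le_iff₀ (by positivity)]; nlinarith [hg1]
    have heq2 : 2^α * x^α * ((auxM x:ℝ)-1)^(α+1) = (2*x*((auxM x:ℝ)-1))^α * ((auxM x:ℝ)-1) := by
      rw [Real.rpow_add_one (by linarith : (auxM x:ℝ)-1 ≠ 0),
        Real.mul_rpow (by positivity) (by linarith),
        Real.mul_rpow (by norm_num) hx0.le]
      ring
    calc (1-3*x)^(α+1)/(2*x)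
        = (1-3*x)^α * ((1-3*x)/(2*x)) := by
          rw [Real.rpow_add_one h13.ne']; ring
      _ ≤ (2*x*((auxM x:ℝ)-1))^α * ((auxM x:ℝ)-1) :=
          mul_le_mul (Real.rpow_le_rpow h13.le hc1 hα0.le) hc2 (by positivity)
            (Real.rpow_nonneg (by nlinarith) _)
      _ = 2^α * x^α * ((auxM x:ℝ)-1)^(α+1) := heq2.symm
      _ ≤ 2^α * x^α * ((α+1) * auxS α (auxM x - 1)) :=
          mul_le_mul_of_nonneg_left hsb1 (by positivity)
      _ = auxT α x := by unfold auxT; ring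
  · have hb2 : (auxM x:ℝ) ≤ (1+x)/(2*x) := by
      rw [le_div_iff₀ (by positivity)]; nlinarith [hg2]
    have heq2 : 2^α * x^α * (auxM x:ℝ)^(α+1) = (2*x*(auxM x:ℝ))^α * (auxM x:ℝ) := by
      rw [Real.rpow_add_one hMpos.ne',
        Real.mul_rpow (by positivity) hMpos.le,
        Real.mul_rpow (by norm_num) hx0.le]
      ring
    calc auxT α x = 2^α * x^α * ((α+1) * auxS α (auxM x - 1)) := by unfold auxT; ring
      _ ≤ 2^α * x^α * (auxM x:ℝ)^(α+1) := mul_le_mul_of_nonneg_left hsb2 (by positivity)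
      _ = (2*x*(auxM x:ℝ))^α * (auxM x:ℝ) := heq2
      _ ≤ (1+x)^α * ((1+x)/(2*x)) :=
          mul_le_mul (Real.rpow_le_rpow (by positivity) hg2 hα0.le) hb2 hMpos.le
            (Real.rpow_nonneg h1p.le _)
      _ = (1+x)^(α+1)/(2*x) := by rw [Real.rpow_add_one h1p.ne']; ring

/-- For `α ≥ 1`, with
`f_α(x) = Σ_{l=0}^∞ 1{l < (1-x)/(2x)}·[((2l+2)/(1+x))^α − ((2l)/(1-x))^α]`,
one has `lim_{x→0+} (α+1)·x^α·f_α(x) = 1`. -/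
theorem stmt12 (α : ℝ) (hα : 1 ≤ α) (f : ℝ → ℝ)
    (hf : ∀ x : ℝ, f x = ∑' l : ℕ,
      if (l : ℝ) < (1 - x) / (2 * x)
      then ((2 * (l : ℝ) + 2) / (1 + x)) ^ α - ((2 * (l : ℝ)) / (1 - x)) ^ α
      else 0) :
    Filter.Tendsto (fun x : ℝ ↦ (α + 1) * x ^ α * f x)
      (nhdsWithin 0 (Set.Ioi 0)) (nhds 1) := by
  have hα0 : (0:ℝ) < α := by linarith
  set L := nhdsWithin (0:ℝ) (Set.Ioi 0) with hL
  have hev : ∀ᶠ x in L, x ∈ Set.Ioo (0:ℝ) (1/4) := by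
    rw [hL]
    exact eventually_of_mem (Ioo_mem_nhdsGT_of_mem ⟨le_refl 0, by norm_num⟩) fun x hx => hx
  -- limit of A
  have hLtend : Tendsto (fun x : ℝ => (α+1)*((1-x)^α * (1+x)^(-α))) L (nhds (α+1)) := by
    have c1 : ContinuousAt (fun x:ℝ => (1-x)^α) 0 :=
      ContinuousAt.rpow_const (continuousAt_const.sub continuousAt_id) (Or.inr hα0.le)
    have c2 : ContinuousAt (fun x:ℝ => (1+x)^(-α)) 0 :=
      ContinuousAt.rpow_const (continuousAt_const.add continuousAt_id) (Or.inl (by norm_num))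
    have c : ContinuousAt (fun x:ℝ => (α+1)*((1-x)^α * (1+x)^(-α))) 0 :=
      continuousAt_const.mul (c1.mul c2)
    have h := c.tendsto.mono_left (nhdsWithin_le_nhds : L ≤ nhds 0)
    have hv : (α+1)*((1-(0:ℝ))^α * (1+(0:ℝ))^(-α)) = α + 1 := by
      norm_num [Real.one_rpow]
    rwa [hv] at h
  have hAtend : Tendsto (fun x => auxA α x) L (nhds (α+1)) :=
    tendsto_of_tendsto_of_tendsto_of_le_of_le' hLtend tendsto_const_nhds
      (hev.mono fun x hx => (aux_Abounds hα hx).1) (hev.mono fun x hx => (aux_Abounds hα hx).2)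
  -- limit of D*T
  have hDx : Tendsto (fun x => auxD α x / x) L (nhds (2*α)) := by
    have := aux_deriv α hα
    rw [hL]
    exact this.congr fun x => by unfold auxD; rfl
  have hHi : Tendsto (fun x => (auxD α x / x) * ((1+x)^(α+1)/2)) L (nhds α) := by
    have c : Tendsto (fun x:ℝ => (1+x)^(α+1)/2) L (nhds (1/2)) := by
      have hc : ContinuousAt (fun x:ℝ => (1+x)^(α+1)/2) 0 :=
        (ContinuousAt.rpow_const (continuousAt_const.add continuousAt_id)
          (Or.inr (by linarith))).div_const 2
      have h := hc.tendsto.mono_left (nhdsWithin_le_nhds : L ≤ nhds 0)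
      have hv : ((1:ℝ)+(0:ℝ))^(α+1)/2 = 1/2 := by norm_num [Real.one_rpow]
      rwa [hv] at h
    have h := hDx.mul c
    have hv : (2*α) * (1/2) = α := by ring
    rwa [hv] at h
  have hLo : Tendsto (fun x => (auxD α x / x) * ((1-3*x)^(α+1)/2)) L (nhds α) := by
    have c : Tendsto (fun x:ℝ => (1-3*x)^(α+1)/2) L (nhds (1/2)) := by
      have hc : ContinuousAt (fun x:ℝ => (1-3*x)^(α+1)/2) 0 :=
        (ContinuousAt.rpow_const (continuousAt_const.sub (continuousAt_id.const_mul 3))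
          (Or.inr (by linarith))).div_const 2
      have h := hc.tendsto.mono_left (nhdsWithin_le_nhds : L ≤ nhds 0)
      have hv : ((1:ℝ)-3*(0:ℝ))^(α+1)/2 = 1/2 := by norm_num [Real.one_rpow]
      rwa [hv] at h
    have h := hDx.mul c
    have hv : (2*α) * (1/2) = α := by ring
    rwa [hv] at h
  have hDTlo : ∀ᶠ x in L, (auxD α x / x) * ((1-3*x)^(α+1)/2) ≤ auxD α x * auxT α x := by
    refine hev.mono fun x hx => ?_
    have hx0 : x ≠ 0 := hx.1.ne'
    have heq : (auxD α x / x) * ((1-3*x)^(α+1)/2) = auxD α x * ((1-3*x)^(α+1)/(2*x)) := by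
      ring
    rw [heq]
    exact mul_le_mul_of_nonneg_left (aux_Tbounds hα hx).1 (aux_Dnn hα hx)
  have hDThi : ∀ᶠ x in L, auxD α x * auxT α x ≤ (auxD α x / x) * ((1+x)^(α+1)/2) := by
    refine hev.mono fun x hx => ?_
    have hx0 : x ≠ 0 := hx.1.ne'
    have heq : (auxD α x / x) * ((1+x)^(α+1)/2) = auxD α x * ((1+x)^(α+1)/(2*x)) := by
      ring
    rw [heq]
    exact mul_le_mul_of_nonneg_left (aux_Tbounds hα hx).2 (aux_Dnn hα hx)
  have hDTtend : Tendsto (fun x => auxD α x * auxT α x) L (nhds α) :=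
    tendsto_of_tendsto_of_tendsto_of_le_of_le' hLo hHi hDTlo hDThi
  have final : Tendsto (fun x => auxA α x - auxD α x * auxT α x) L (nhds 1) := by
    have h := hAtend.sub hDTtend
    have hv : (α+1) - α = 1 := by ring
    rwa [hv] at h
  refine final.congr' ?_
  refine hev.mono fun x hx => ?_
  show auxA α x - auxD α x * auxT α x = (α + 1) * x ^ α * f x
  rw [hf x]
  exact (aux_key hα hx (aux_Mfacts hx).2.2).symm
end

section
/- Fix α ≥ 1, μ > 0, and q > α. Define F(y) = (1/√(2πμ)) ∫_{(y,1)} f_α(y/ξ) ξ^(-α) (1-ξ)^(-1/2) dξ where f_α(x) = Σ_{l=0}^∞ 1{l < (1-x)/(2x)}·[((2l+2)/(1+x))^α − ((2l)/(1-x))^α]. Then 2·∫_{(0,1]} q·x^(q-1)·F(x) dx = √(2/μ) · (Γ(q-α+1)/Γ(q-α+3/2)) · ∫_{(0,1)} q·x^(q-1)·f_α(x) dx, and in particular this quantity is finite. -/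
open MeasureTheory
open scoped ENNReal

namespace Stmt15Aux

/-- The summand. -/
noncomputable def T (α : ℝ) (x : ℝ) (l : ℕ) : ℝ :=
  if (l : ℝ) < (1 - x) / (2 * x)
  then ((2 * (l : ℝ) + 2) / (1 + x)) ^ α - ((2 * (l : ℝ)) / (1 - x)) ^ α
  else 0

noncomputable def fa (α : ℝ) (x : ℝ) : ℝ := ∑' l : ℕ, T α x l

variable (α : ℝ)

lemma cond_imp {x : ℝ} {l : ℕ} (h : (l : ℝ) < (1 - x) / (2 * x)) :
    0 < x ∧ x < 1 ∧ 2 * l * x < 1 - x := by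
  have hx : 0 < x := by
    by_contra hx
    push_neg at hx
    rcases lt_or_eq_of_le hx with hx' | hx'
    · have h0 : (1 - x) / (2 * x) ≤ 0 :=
        div_nonpos_iff.2 (Or.inl ⟨by linarith, by linarith⟩)
      have : (l : ℝ) < 0 := lt_of_lt_of_le h h0
      exact absurd this (not_lt.2 (Nat.cast_nonneg l))
    · subst hx'
      simp at h
      exact absurd h (not_lt.2 (Nat.cast_nonneg l))
  have h2 : (l : ℝ) * (2 * x) < 1 - x := (lt_div_iff₀ (by positivity)).1 h
  have hx1 : x < 1 := by nlinarith [Nat.cast_nonneg (α := ℝ) l]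
  exact ⟨hx, hx1, by nlinarith⟩

lemma T_nonneg (hα : 1 ≤ α) (x : ℝ) (l : ℕ) : 0 ≤ T α x l := by
  unfold T
  split
  · rename_i h
    obtain ⟨hx, hx1, hkey⟩ := cond_imp h
    have h1x : (0:ℝ) < 1 - x := by linarith
    have h1x' : (0:ℝ) < 1 + x := by linarith
    have hl : (0:ℝ) ≤ (l:ℝ) := Nat.cast_nonneg l
    have hbase : (2 * (l : ℝ)) / (1 - x) ≤ (2 * (l : ℝ) + 2) / (1 + x) := by
      rw [div_le_div_iff₀ h1x h1x']
      nlinarith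
    have hnn : (0:ℝ) ≤ (2 * (l : ℝ)) / (1 - x) := div_nonneg (by positivity) h1x.le
    have := Real.rpow_le_rpow hnn hbase (by linarith : (0:ℝ) ≤ α)
    linarith
  · exact le_refl 0

lemma fa_nonneg (hα : 1 ≤ α) (x : ℝ) : 0 ≤ fa α x :=
  tsum_nonneg (T_nonneg α hα x)

lemma T_eq_zero_of_ge {x : ℝ} {l : ℕ}
    (h : (⌈(1 - x) / (2 * x)⌉₊ : ℕ) ≤ l) : T α x l = 0 := by
  unfold T
  rw [if_neg]
  intro hc
  exact absurd (Nat.lt_ceil.2 hc) h.not_gt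

lemma summable_T (x : ℝ) : Summable (T α x) :=
  summable_of_ne_finset_zero (s := Finset.range ⌈(1 - x) / (2 * x)⌉₊)
    (fun l hl => T_eq_zero_of_ge α (le_of_not_gt (fun h => hl (Finset.mem_range.2 h))))

lemma fa_eq_zero_of_nonpos {x : ℝ} (hx : x ≤ 0) : fa α x = 0 := by
  unfold fa
  have h : ∀ l : ℕ, T α x l = 0 := by
    intro l
    unfold T
    rw [if_neg]
    intro hc
    exact absurd ((cond_imp hc).1) hx.not_gt
  calc ∑' l : ℕ, T α x l = ∑' _ : ℕ, (0:ℝ) := tsum_congr h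
    _ = 0 := tsum_zero

lemma fa_eq_zero_of_one_le {x : ℝ} (hx : 1 ≤ x) : fa α x = 0 := by
  unfold fa
  have h : ∀ l : ℕ, T α x l = 0 := by
    intro l
    unfold T
    rw [if_neg]
    intro hc
    exact absurd ((cond_imp hc).2.1) hx.not_gt
  calc ∑' l : ℕ, T α x l = ∑' _ : ℕ, (0:ℝ) := tsum_congr h
    _ = 0 := tsum_zero

lemma fa_le (hα : 1 ≤ α) {x : ℝ} (hx : 0 < x) : fa α x ≤ x ^ (-α) := by
  rcases le_or_gt 1 x with hx1 | hx1
  · rw [fa_eq_zero_of_one_le α hx1]; positivity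
  have h1x : (0:ℝ) < 1 - x := by linarith
  have h1x' : (0:ℝ) < 1 + x := by linarith
  set N : ℕ := ⌈(1 - x) / (2 * x)⌉₊ with hN
  set U : ℕ → ℝ := fun l =>
    if (l : ℝ) < (1 - x) / (2 * x)
    then (2 * ((l : ℝ) + 1) / (1 + x)) ^ α - (2 * (l : ℝ) / (1 + x)) ^ α
    else 0 with hU
  have hUzero : ∀ l ∉ Finset.range N, U l = 0 := by
    intro l hl
    rw [hU]
    simp only
    rw [if_neg]
    intro hc
    exact hl (Finset.mem_range.2 (Nat.lt_ceil.2 hc))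
  have hsumU : Summable U := summable_of_ne_finset_zero hUzero
  have hTU : ∀ l, T α x l ≤ U l := by
    intro l
    unfold T
    rw [hU]
    simp only
    split
    · have hbase : (2 * (l : ℝ)) / (1 + x) ≤ (2 * (l : ℝ)) / (1 - x) := by
        rw [div_le_div_iff₀ h1x' h1x]
        nlinarith [Nat.cast_nonneg (α := ℝ) l]
      have hnn : (0:ℝ) ≤ (2 * (l : ℝ)) / (1 + x) := div_nonneg (by positivity) h1x'.le
      have h5 := Real.rpow_le_rpow hnn hbase (by linarith : (0:ℝ) ≤ α)
      have h2 : (2 * ((l:ℝ) + 1)) = 2 * (l:ℝ) + 2 := by ring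
      rw [h2]
      linarith
    · exact le_refl 0
  have h1 : fa α x ≤ ∑' l, U l := Summable.tsum_le_tsum hTU (summable_T α x) hsumU
  have h2 : ∑' l, U l = ∑ l ∈ Finset.range N, U l := tsum_eq_sum hUzero
  have h3 : ∑ l ∈ Finset.range N, U l = (2 * (N:ℝ) / (1 + x)) ^ α := by
    have hc : ∀ l ∈ Finset.range N, U l =
        (2 * ((l:ℝ) + 1) / (1 + x)) ^ α - (2 * (l:ℝ) / (1 + x)) ^ α := by
      intro l hl
      rw [hU]
      simp only
      rw [if_pos (Nat.lt_ceil.1 (Finset.mem_range.1 hl))]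
    rw [Finset.sum_congr rfl hc]
    have hts := Finset.sum_range_sub (f := fun l : ℕ => (2 * (l:ℝ) / (1 + x)) ^ α) N
    simp only [Nat.cast_add, Nat.cast_one] at hts
    rw [hts]
    norm_num
    rw [Real.zero_rpow (by linarith)]
  have h4 : (2 * (N:ℝ) / (1 + x)) ^ α ≤ x ^ (-α) := by
    have hceil : (N : ℝ) < (1 - x) / (2 * x) + 1 :=
      Nat.ceil_lt_add_one (by positivity)
    have h5 : ((N:ℝ) - 1) * (2*x) < 1 - x :=
      (lt_div_iff₀ (by positivity)).1 (by linarith)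
    have hb : 2 * (N:ℝ) / (1 + x) ≤ x⁻¹ := by
      rw [inv_eq_one_div, div_le_div_iff₀ h1x' hx]
      nlinarith
    calc (2 * (N:ℝ) / (1 + x)) ^ α ≤ (x⁻¹) ^ α :=
          Real.rpow_le_rpow (by positivity) hb (by linarith)
      _ = x ^ (-α) := by rw [Real.inv_rpow hx.le, ← Real.rpow_neg hx.le]
  calc fa α x ≤ ∑' l, U l := h1
    _ = _ := h2.trans h3
    _ ≤ _ := h4

lemma measurable_fa (hα : 1 ≤ α) : Measurable (fa α) := by
  have hcont : Continuous fun y : ℝ => y ^ α :=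
    continuous_iff_continuousAt.2
      (fun x => Real.continuousAt_rpow_const x α (Or.inr (by linarith)))
  have hT : ∀ l : ℕ, Measurable fun x => T α x l := by
    intro l
    unfold T
    apply Measurable.ite
    · exact measurableSet_lt measurable_const
        ((measurable_const.sub measurable_id).div (measurable_const.mul measurable_id))
    · exact (hcont.measurable.comp
          (measurable_const.div (measurable_const.add measurable_id))).sub
        (hcont.measurable.comp
          (measurable_const.div (measurable_const.sub measurable_id)))
    · exact measurable_const
  apply measurable_of_tendsto_metrizable
    (f := fun n x => ∑ l ∈ Finset.range n, T α x l)
  · intro n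
    exact Finset.measurable_sum _ (fun l _ => hT l)
  · rw [tendsto_pi_nhds]
    intro x
    exact (summable_T α x).hasSum.tendsto_sum_nat

lemma cov_lem (g : ℝ → ℝ≥0∞) (hg : Measurable g) {ξ : ℝ} (hξ : 0 < ξ) :
    ∫⁻ x in Set.Ioo (0:ℝ) ξ, g x = ENNReal.ofReal ξ * ∫⁻ u in Set.Ioo (0:ℝ) 1, g (ξ * u) := by
  have hmap : Measure.map (fun x : ℝ => ξ * x) (ENNReal.ofReal ξ • volume) = volume := by
    rw [Measure.map_smul, Real.map_volume_mul_left hξ.ne']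
    rw [smul_smul, abs_of_pos (inv_pos.2 hξ), ← ENNReal.ofReal_mul hξ.le,
      mul_inv_cancel₀ hξ.ne', ENNReal.ofReal_one, one_smul]
  have key : ∀ h : ℝ → ℝ≥0∞, Measurable h →
      ∫⁻ x, h x = ENNReal.ofReal ξ * ∫⁻ u, h (ξ * u) := by
    intro h hh
    conv_lhs => rw [← hmap]
    rw [lintegral_map (g := fun x : ℝ => ξ * x) hh (measurable_const.mul measurable_id), lintegral_smul_measure, smul_eq_mul]
  have h1 : ∫⁻ x in Set.Ioo (0:ℝ) ξ, g x
      = ∫⁻ x, (Set.Ioo (0:ℝ) ξ).indicator g x := by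
    rw [lintegral_indicator measurableSet_Ioo]
  rw [h1, key _ (hg.indicator measurableSet_Ioo)]
  congr 1
  have h2 : (fun u => (Set.Ioo (0:ℝ) ξ).indicator g (ξ * u))
      = (Set.Ioo (0:ℝ) 1).indicator (fun u => g (ξ * u)) := by
    funext u
    by_cases hu : u ∈ Set.Ioo (0:ℝ) 1
    · rw [Set.indicator_of_mem hu]
      rw [Set.indicator_of_mem]
      constructor
      · exact mul_pos hξ hu.1
      · nlinarith [hu.2, hu.1]
    · rw [Set.indicator_of_notMem hu, Set.indicator_of_notMem]
      intro hmem
      apply hu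
      obtain ⟨h1', h2'⟩ := hmem
      have hu0 : 0 < u := by
        rcases mul_pos_iff.1 h1' with ⟨_, hh⟩ | ⟨hh, _⟩
        · exact hh
        · linarith
      constructor
      · exact hu0
      · nlinarith
  rw [h2, lintegral_indicator measurableSet_Ioo]

lemma beta_eval {s : ℝ} (hs : 0 < s) :
    ∫ x in Set.Ioo (0:ℝ) 1, x ^ s * (1 - x) ^ (-(1:ℝ)/2)
      = Real.Gamma (s + 1) * Real.sqrt Real.pi / Real.Gamma (s + 3/2) := by
  have h1 : (0:ℝ) < s + 1 := by linarith
  have h2 : (0:ℝ) < s + 3/2 := by linarith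
  have hΓ : Complex.Gamma (s+1) * Complex.Gamma (1/2)
      = Complex.Gamma ((s+1) + 1/2) * Complex.betaIntegral (s+1) (1/2) :=
    Complex.Gamma_mul_Gamma_eq_betaIntegral (by simpa using h1) (by norm_num)
  have hbc : Complex.betaIntegral (s+1) (1/2)
      = ((∫ x in Set.Ioo (0:ℝ) 1, x ^ s * (1 - x) ^ (-(1:ℝ)/2) : ℝ) : ℂ) := by
    rw [Complex.betaIntegral]
    rw [intervalIntegral.integral_of_le (by norm_num : (0:ℝ) ≤ 1)]
    rw [← Measure.restrict_congr_set Ioo_ae_eq_Ioc]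
    calc ∫ x in Set.Ioo (0:ℝ) 1, (x:ℂ) ^ ((s:ℂ)+1-1) * (1-(x:ℂ)) ^ ((1/2:ℂ)-1)
        = ∫ x in Set.Ioo (0:ℝ) 1, ((x ^ s * (1 - x) ^ (-(1:ℝ)/2) : ℝ) : ℂ) := by
          apply setIntegral_congr_fun measurableSet_Ioo
          intro x hx
          obtain ⟨hx0, hx1⟩ := hx
          have e1 : ((x:ℂ)) ^ ((s:ℂ) + 1 - 1) = ((x ^ s : ℝ) : ℂ) := by
            rw [add_sub_cancel_right, ← Complex.ofReal_cpow hx0.le]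
          have e2 : ((1:ℂ) - (x:ℂ)) ^ ((1/2 : ℂ) - 1) = (((1 - x) ^ (-(1:ℝ)/2) : ℝ) : ℂ) := by
            have h3 : ((1:ℂ)/2 - 1) = ((-(1:ℝ)/2 : ℝ) : ℂ) := by norm_num
            rw [show ((1:ℂ) - (x:ℂ)) = ((1-x : ℝ) : ℂ) by push_cast; ring, h3,
              ← Complex.ofReal_cpow (by linarith)]
          beta_reduce
          rw [Complex.ofReal_mul, e1, e2]
      _ = _ := integral_ofReal
  have hΓne : Complex.Gamma ((s+1) + 1/2) ≠ 0 := by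
    have h4 : ((s:ℂ)+1) + 1/2 = ((s + 3/2 : ℝ) : ℂ) := by push_cast; ring
    rw [h4, Complex.Gamma_ofReal]
    exact_mod_cast (Real.Gamma_pos_of_pos h2).ne'
  have this1 := hΓ
  rw [hbc] at this1
  have g1 : Complex.Gamma ((s:ℂ)+1) = ((Real.Gamma (s+1) : ℝ) : ℂ) := by
    rw [show ((s:ℂ)+1) = ((s+1:ℝ):ℂ) by push_cast; ring, Complex.Gamma_ofReal]
  have g2 : Complex.Gamma (1/2 : ℂ) = ((Real.Gamma (1/2) : ℝ) : ℂ) := by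
    rw [show ((1:ℂ)/2) = ((1/2:ℝ):ℂ) by push_cast; ring, Complex.Gamma_ofReal]
  have g3 : Complex.Gamma ((s:ℂ)+1+1/2) = ((Real.Gamma (s+3/2) : ℝ) : ℂ) := by
    rw [show ((s:ℂ)+1+1/2) = ((s+3/2:ℝ):ℂ) by push_cast; ring, Complex.Gamma_ofReal]
  rw [g1, g2, g3, ← Complex.ofReal_mul, ← Complex.ofReal_mul] at this1
  have hreal := Complex.ofReal_inj.mp this1
  have hΓr : (0:ℝ) < Real.Gamma (s + 3/2) := Real.Gamma_pos_of_pos h2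
  rw [Real.Gamma_one_half_eq] at hreal
  rw [eq_div_iff hΓr.ne']
  linear_combination -hreal

lemma integrableOn_one_sub :
    IntegrableOn (fun ξ : ℝ => (1 - ξ) ^ (-(1:ℝ)/2)) (Set.Ioo 0 1) := by
  have h := (intervalIntegral.intervalIntegrable_rpow' (r := -(1:ℝ)/2) (by norm_num)
      (a := 0) (b := 1)).comp_sub_left 1
  simp only [sub_zero, sub_self] at h
  exact (intervalIntegrable_iff_integrableOn_Ioo_of_le (by norm_num)).1 h.symm

lemma lintegral_one_sub_lt_top :
    ∫⁻ ξ in Set.Ioo (0:ℝ) 1, ENNReal.ofReal ((1 - ξ) ^ (-(1:ℝ)/2)) < ⊤ :=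
  Integrable.lintegral_lt_top integrableOn_one_sub

lemma integrableOn_rpow {r : ℝ} (hr : -1 < r) :
    IntegrableOn (fun x : ℝ => x ^ r) (Set.Ioo 0 1) :=
  (intervalIntegrable_iff_integrableOn_Ioo_of_le zero_le_one).1
    (intervalIntegral.intervalIntegrable_rpow' hr)

end Stmt15Aux

open Stmt15Aux in
/-- For `α ≥ 1`, `μ > 0`, `q > α`:
`2∫_{(0,1]} q·x^(q-1)·F(x) dx = √(2/μ)·(Γ(q-α+1)/Γ(q-α+3/2))·∫_{(0,1)} q·x^(q-1)·f_α(x) dx`,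
and in particular the left-hand integrand is integrable. -/

theorem stmt15 (α μ q : ℝ) (hα : 1 ≤ α) (hμ : 0 < μ) (hq : α < q)
    (f : ℝ → ℝ)
    (hf : ∀ x : ℝ, f x = ∑' l : ℕ,
      if (l : ℝ) < (1 - x) / (2 * x)
      then ((2 * (l : ℝ) + 2) / (1 + x)) ^ α - ((2 * (l : ℝ)) / (1 - x)) ^ α
      else 0)
    (F : ℝ → ℝ)
    (hF : ∀ y : ℝ, F y = (1 / Real.sqrt (2 * Real.pi * μ)) *
      ∫ ξ in Set.Ioo y 1, f (y / ξ) * ξ ^ (-α) * (1 - ξ) ^ (-(1 : ℝ) / 2)) :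
    IntegrableOn (fun x : ℝ ↦ q * x ^ (q - 1) * F x) (Set.Ioc 0 1) ∧
    2 * ∫ x in Set.Ioc (0 : ℝ) 1, q * x ^ (q - 1) * F x =
      Real.sqrt (2 / μ) * (Real.Gamma (q - α + 1) / Real.Gamma (q - α + 3 / 2)) *
        ∫ x in Set.Ioo (0 : ℝ) 1, q * x ^ (q - 1) * f x := by
  have hfe : f = fa α := funext fun x => by rw [hf x]; rfl
  subst hfe
  set c : ℝ := 1 / Real.sqrt (2 * Real.pi * μ) with hc_def
  have hπμ : (0:ℝ) < 2 * Real.pi * μ := by positivity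
  have hc : 0 < c := by
    rw [hc_def]
    positivity
  have hq0 : 0 < q := by linarith
  have hq1 : (0:ℝ) ≤ q - 1 := by linarith
  have hs : 0 < q - α := by linarith
  have hmf : Measurable (fa α) := measurable_fa α hα
  have hcontq : Continuous fun y : ℝ => y ^ (q-1) :=
    continuous_iff_continuousAt.2
      (fun x => Real.continuousAt_rpow_const x (q-1) (Or.inr hq1))
  have hcontα : Continuous fun y : ℝ => y ^ α :=
    continuous_iff_continuousAt.2
      (fun x => Real.continuousAt_rpow_const x α (Or.inr (by linarith)))
  set Ilint : ℝ≥0∞ := ∫⁻ u in Set.Ioo (0:ℝ) 1, ENNReal.ofReal (q * u ^ (q-1) * fa α u)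
    with hIlint_def
  set Blint : ℝ≥0∞ := ∫⁻ ξ in Set.Ioo (0:ℝ) 1,
      ENNReal.ofReal (ξ ^ (q-α) * (1-ξ) ^ (-(1:ℝ)/2)) with hBlint_def
  have hIlt : Ilint < ⊤ := by
    rw [hIlint_def]
    have hle : ∫⁻ u in Set.Ioo (0:ℝ) 1, ENNReal.ofReal (q * u ^ (q-1) * fa α u)
        ≤ ∫⁻ u in Set.Ioo (0:ℝ) 1, ENNReal.ofReal (q * u ^ (q-1-α)) := by
      apply setLIntegral_mono' measurableSet_Ioo
      intro x hx
      apply ENNReal.ofReal_le_ofReal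
      have h1 : fa α x ≤ x ^ (-α) := fa_le α hα hx.1
      have h2 : x ^ (q-1) * x ^ (-α) = x ^ (q-1-α) := by
        rw [← Real.rpow_add hx.1]
        ring_nf
      calc q * x ^ (q-1) * fa α x ≤ q * x ^ (q-1) * x ^ (-α) := by
            apply mul_le_mul_of_nonneg_left h1
            exact mul_nonneg hq0.le (Real.rpow_nonneg hx.1.le _)
        _ = q * x ^ (q-1-α) := by rw [mul_assoc, h2]
    refine lt_of_le_of_lt hle ?_
    exact Integrable.lintegral_lt_top
      ((integrableOn_rpow (by linarith : (-1:ℝ) < q-1-α)).const_mul q)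
  have hBlt : Blint < ⊤ := by
    rw [hBlint_def]
    have hle : ∫⁻ ξ in Set.Ioo (0:ℝ) 1, ENNReal.ofReal (ξ ^ (q-α) * (1-ξ) ^ (-(1:ℝ)/2))
        ≤ ∫⁻ ξ in Set.Ioo (0:ℝ) 1, ENNReal.ofReal ((1-ξ) ^ (-(1:ℝ)/2)) := by
      apply setLIntegral_mono' measurableSet_Ioo
      intro x hx
      apply ENNReal.ofReal_le_ofReal
      have h1 : x ^ (q-α) ≤ 1 := Real.rpow_le_one hx.1.le hx.2.le hs.le
      have h2 : (0:ℝ) ≤ (1-x) ^ (-(1:ℝ)/2) := Real.rpow_nonneg (by linarith [hx.2]) _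
      nlinarith [Real.rpow_nonneg hx.1.le (q-α)]
    exact lt_of_le_of_lt hle lintegral_one_sub_lt_top
  set S : Set (ℝ×ℝ) := {p : ℝ × ℝ | 0 < p.1 ∧ p.1 < p.2 ∧ p.2 < 1} with hS_def
  have hS : MeasurableSet S := by
    apply MeasurableSet.inter
    · exact measurableSet_lt measurable_const measurable_fst
    exact MeasurableSet.inter (measurableSet_lt measurable_fst measurable_snd)
      (measurableSet_lt measurable_snd measurable_const)
  set W : ℝ × ℝ → ℝ≥0∞ := fun p => S.indicator (fun p =>
      ENNReal.ofReal (q * p.1 ^ (q-1)) *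
      ENNReal.ofReal (fa α (p.1 / p.2) * (p.2 ^ α)⁻¹ * (Real.sqrt (1 - p.2))⁻¹)) p
    with hW_def
  have hW : Measurable W := by
    apply Measurable.indicator _ hS
    apply Measurable.mul (f := fun p : ℝ × ℝ => ENNReal.ofReal (q * p.1 ^ (q-1)))
      (g := fun p : ℝ × ℝ => ENNReal.ofReal (fa α (p.1 / p.2) * (p.2 ^ α)⁻¹ * (Real.sqrt (1 - p.2))⁻¹))
    · exact ((hcontq.measurable.comp measurable_fst).const_mul q).ennreal_ofReal
    · apply Measurable.ennreal_ofReal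
      exact (((hmf.comp (measurable_fst.div measurable_snd)).mul
        ((hcontα.measurable.comp measurable_snd).inv)).mul
        ((Real.continuous_sqrt.measurable.comp (measurable_const.sub measurable_snd)).inv))
  set inr : ℝ → ℝ≥0∞ := fun x => ∫⁻ ξ in Set.Ioo x 1,
      ENNReal.ofReal (fa α (x/ξ) * ξ ^ (-α) * (1-ξ) ^ (-(1:ℝ)/2)) with hinr_def
  have hsec0 : ∀ x, x ∉ Set.Ioo (0:ℝ) 1 → ∀ ξ, W (x, ξ) = 0 := by
    intro x hx ξ
    rw [hW_def]
    apply Set.indicator_of_notMem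
    intro hmem
    exact hx ⟨hmem.1, by rcases hmem with ⟨h1,h2,h3⟩; simp only at *; linarith⟩
  have hsecξ0 : ∀ ξ, ξ ∉ Set.Ioo (0:ℝ) 1 → ∀ x, W (x, ξ) = 0 := by
    intro ξ hξ x
    rw [hW_def]
    apply Set.indicator_of_notMem
    intro hmem
    rcases hmem with ⟨h1,h2,h3⟩
    simp only at *
    exact hξ ⟨by linarith, h3⟩
  have hsec1 : ∀ x ∈ Set.Ioo (0:ℝ) 1,
      ∫⁻ ξ, W (x, ξ) = ENNReal.ofReal (q * x ^ (q-1)) * inr x := by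
    intro x hx
    have hfun : ∀ ξ, W (x, ξ) = (Set.Ioo x 1).indicator (fun ξ =>
        ENNReal.ofReal (q * x ^ (q-1)) *
        ENNReal.ofReal (fa α (x/ξ) * (ξ ^ α)⁻¹ * (Real.sqrt (1-ξ))⁻¹)) ξ := by
      intro ξ
      rw [hW_def]
      beta_reduce
      by_cases hξ : ξ ∈ Set.Ioo x 1
      · rw [Set.indicator_of_mem (show (x, ξ) ∈ S from ⟨hx.1, hξ.1, hξ.2⟩),
          Set.indicator_of_mem hξ]
      · rw [Set.indicator_of_notMem hξ, Set.indicator_of_notMem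
          (show (x, ξ) ∉ S from fun hmem => hξ ⟨hmem.2.1, hmem.2.2⟩)]
    rw [lintegral_congr hfun, lintegral_indicator measurableSet_Ioo,
      lintegral_const_mul' _ _ ENNReal.ofReal_ne_top, hinr_def]
    congr 1
    apply setLIntegral_congr_fun measurableSet_Ioo
    refine (fun ξ hξ => ?_)
    have hξ0 : 0 < ξ := lt_trans hx.1 hξ.1
    beta_reduce
    rw [Real.rpow_neg hξ0.le, Real.sqrt_eq_rpow,
      show (-(1:ℝ)/2) = -((1:ℝ)/2) by norm_num,
      Real.rpow_neg (by linarith [hξ.2] : (0:ℝ) ≤ 1 - ξ)]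
  have hsec2 : ∀ ξ ∈ Set.Ioo (0:ℝ) 1,
      ∫⁻ x, W (x, ξ) = ENNReal.ofReal (ξ ^ (q-α) * (1-ξ) ^ (-(1:ℝ)/2)) * Ilint := by
    intro ξ hξ
    have hξ0 : (0:ℝ) < ξ := hξ.1
    have h1ξ : (0:ℝ) ≤ 1 - ξ := by linarith [hξ.2]
    have hfun : ∀ x, W (x, ξ) = (Set.Ioo (0:ℝ) ξ).indicator (fun x =>
        ENNReal.ofReal ((ξ ^ α)⁻¹ * (Real.sqrt (1-ξ))⁻¹) *
        ENNReal.ofReal (q * x ^ (q-1) * fa α (x/ξ))) x := by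
      intro x
      rw [hW_def]
      beta_reduce
      by_cases hx : x ∈ Set.Ioo (0:ℝ) ξ
      · rw [Set.indicator_of_mem (show (x, ξ) ∈ S from ⟨hx.1, hx.2, hξ.2⟩),
          Set.indicator_of_mem hx]
        rw [← ENNReal.ofReal_mul (mul_nonneg hq0.le (Real.rpow_nonneg hx.1.le _)),
          ← ENNReal.ofReal_mul (by positivity)]
        congr 1
        ring
      · rw [Set.indicator_of_notMem hx, Set.indicator_of_notMem
          (show (x, ξ) ∉ S from fun hmem => hx ⟨hmem.1, hmem.2.1⟩)]
    rw [lintegral_congr hfun, lintegral_indicator measurableSet_Ioo,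
      lintegral_const_mul' _ _ ENNReal.ofReal_ne_top]
    have hg : Measurable fun x : ℝ => ENNReal.ofReal (q * x ^ (q-1) * fa α (x/ξ)) :=
      ((hcontq.measurable.const_mul q).mul
        (hmf.comp (measurable_id.div_const ξ))).ennreal_ofReal
    rw [cov_lem _ hg hξ0]
    have hcong : ∫⁻ u in Set.Ioo (0:ℝ) 1, ENNReal.ofReal (q * (ξ*u) ^ (q-1) * fa α ((ξ*u)/ξ))
        = ∫⁻ u in Set.Ioo (0:ℝ) 1,
          ENNReal.ofReal (ξ ^ (q-1)) * ENNReal.ofReal (q * u ^ (q-1) * fa α u) := by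
      apply setLIntegral_congr_fun measurableSet_Ioo
      refine (fun u hu => ?_)
      beta_reduce
      rw [mul_div_cancel_left₀ _ hξ0.ne', Real.mul_rpow hξ0.le hu.1.le,
        ← ENNReal.ofReal_mul (Real.rpow_nonneg hξ0.le _)]
      congr 1
      ring
    rw [hcong, lintegral_const_mul' _ _ ENNReal.ofReal_ne_top, ← hIlint_def]
    rw [← mul_assoc, ← mul_assoc, ← ENNReal.ofReal_mul (by positivity),
      ← ENNReal.ofReal_mul (by positivity)]
    congr 2
    have e1 : (ξ ^ α)⁻¹ = ξ ^ (-α) := (Real.rpow_neg hξ0.le α).symm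
    have e2 : (Real.sqrt (1-ξ))⁻¹ = (1-ξ) ^ (-(1:ℝ)/2) := by
      rw [Real.sqrt_eq_rpow, show (-(1:ℝ)/2) = -((1:ℝ)/2) by norm_num,
        Real.rpow_neg h1ξ]
    have e3 : ξ ^ (-α) * ξ ^ (1:ℝ) * ξ ^ (q-1) = ξ ^ (q-α) := by
      rw [← Real.rpow_add hξ0, ← Real.rpow_add hξ0]
      ring_nf
    rw [e1, e2, show ξ ^ (-α) * (1-ξ) ^ (-(1:ℝ)/2) * ξ * ξ ^ (q-1)
        = ξ ^ (-α) * ξ ^ (1:ℝ) * ξ ^ (q-1) * (1-ξ) ^ (-(1:ℝ)/2) by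
          rw [Real.rpow_one]; ring, e3]
  set Ψ : ℝ → ℝ≥0∞ := fun x => ∫⁻ ξ, W (x, ξ) with hΨ_def
  have hΨm : Measurable Ψ := hW.lintegral_prod_right'
  have hWint : ∫⁻ x, Ψ x = Blint * Ilint := by
    rw [hΨ_def]
    have hswap := lintegral_lintegral_swap
      (μ := (volume : Measure ℝ)) (ν := (volume : Measure ℝ))
      (f := fun x ξ => W (x, ξ)) (by exact hW.aemeasurable)
    rw [hswap]
    have hz : ∫⁻ ξ, ∫⁻ x, W (x, ξ) = ∫⁻ ξ in Set.Ioo (0:ℝ) 1, ∫⁻ x, W (x, ξ) := by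
      rw [← lintegral_indicator measurableSet_Ioo]
      apply lintegral_congr
      intro ξ
      by_cases hξ : ξ ∈ Set.Ioo (0:ℝ) 1
      · rw [Set.indicator_of_mem hξ]
      · rw [Set.indicator_of_notMem hξ]
        exact (lintegral_congr (fun x => hsecξ0 ξ hξ x)).trans lintegral_zero
    rw [hz, setLIntegral_congr_fun measurableSet_Ioo
      (fun ξ hξ => hsec2 ξ hξ),
      lintegral_mul_const' _ _ hIlt.ne, ← hBlint_def]
  have hinnerlt : ∀ x ∈ Set.Ioo (0:ℝ) 1, inr x < ⊤ := by
    intro x hx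
    rw [hinr_def]
    have hle : ∫⁻ ξ in Set.Ioo x 1,
          ENNReal.ofReal (fa α (x/ξ) * ξ ^ (-α) * (1-ξ) ^ (-(1:ℝ)/2))
        ≤ ∫⁻ ξ in Set.Ioo x 1,
          ENNReal.ofReal (x ^ (-α)) * ENNReal.ofReal ((1-ξ) ^ (-(1:ℝ)/2)) := by
      apply setLIntegral_mono' measurableSet_Ioo
      intro ξ hξ
      have hξ0 : 0 < ξ := lt_trans hx.1 hξ.1
      rw [← ENNReal.ofReal_mul (Real.rpow_nonneg hx.1.le _)]
      apply ENNReal.ofReal_le_ofReal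
      have h1 : fa α (x/ξ) ≤ (x/ξ) ^ (-α) := fa_le α hα (div_pos hx.1 hξ0)
      have h2 : (x/ξ) ^ (-α) * ξ ^ (-α) = x ^ (-α) := by
        rw [← Real.mul_rpow (div_nonneg hx.1.le hξ0.le) hξ0.le,
          div_mul_cancel₀ _ hξ0.ne']
      have h3 : (0:ℝ) ≤ (1-ξ) ^ (-(1:ℝ)/2) :=
        Real.rpow_nonneg (by linarith [hξ.2]) _
      calc fa α (x/ξ) * ξ ^ (-α) * (1-ξ) ^ (-(1:ℝ)/2)
          ≤ (x/ξ) ^ (-α) * ξ ^ (-α) * (1-ξ) ^ (-(1:ℝ)/2) := by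
            apply mul_le_mul_of_nonneg_right _ h3
            exact mul_le_mul_of_nonneg_right h1 (Real.rpow_nonneg hξ0.le _)
        _ = x ^ (-α) * (1-ξ) ^ (-(1:ℝ)/2) := by rw [h2]
    refine lt_of_le_of_lt hle ?_
    rw [lintegral_const_mul' _ _ ENNReal.ofReal_ne_top]
    apply ENNReal.mul_lt_top ENNReal.ofReal_lt_top
    refine lt_of_le_of_lt (lintegral_mono_set (Set.Ioo_subset_Ioo_left hx.1.le)) ?_
    exact lintegral_one_sub_lt_top
  have hFx : ∀ x ∈ Set.Ioo (0:ℝ) 1, F x = c * (inr x).toReal := by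
    intro x hx
    rw [hF x, hinr_def]
    congr 1
    apply integral_eq_lintegral_of_nonneg_ae
    · rw [Filter.EventuallyLE, ae_restrict_iff' measurableSet_Ioo]
      refine ae_of_all _ (fun ξ hξ => ?_)
      have hξ0 : 0 < ξ := lt_trans hx.1 hξ.1
      exact mul_nonneg (mul_nonneg (fa_nonneg α hα _) (Real.rpow_nonneg hξ0.le _))
        (Real.rpow_nonneg (by linarith [hξ.2]) _)
    · apply AEStronglyMeasurable.congr (f := fun ξ : ℝ =>
        fa α (x/ξ) * (ξ ^ α)⁻¹ * (Real.sqrt (1-ξ))⁻¹)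
      · exact (((hmf.comp (measurable_const.div measurable_id)).mul
          (hcontα.measurable.inv)).mul
          ((Real.continuous_sqrt.measurable.comp
            (measurable_const.sub measurable_id)).inv)).aestronglyMeasurable
      · rw [Filter.EventuallyEq, ae_restrict_iff' measurableSet_Ioo]
        refine ae_of_all _ (fun ξ hξ => ?_)
        have hξ0 : 0 < ξ := lt_trans hx.1 hξ.1
        rw [Real.rpow_neg hξ0.le, Real.sqrt_eq_rpow,
          show (-(1:ℝ)/2) = -((1:ℝ)/2) by norm_num,
          Real.rpow_neg (by linarith [hξ.2] : (0:ℝ) ≤ 1 - ξ)]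
  have hΨx : ∀ x ∈ Set.Ioo (0:ℝ) 1, Ψ x = ENNReal.ofReal (q * x ^ (q-1)) * inr x :=
    hsec1
  have hΦΨ : ∀ x ∈ Set.Ioo (0:ℝ) 1, q * x ^ (q-1) * F x = c * (Ψ x).toReal := by
    intro x hx
    rw [hFx x hx, hΨx x hx, ENNReal.toReal_mul,
      ENNReal.toReal_ofReal (mul_nonneg hq0.le (Real.rpow_nonneg hx.1.le _))]
    ring
  have hrestr : volume.restrict (Set.Ioo (0:ℝ) 1) = volume.restrict (Set.Ioc (0:ℝ) 1) :=
    Measure.restrict_congr_set Ioo_ae_eq_Ioc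
  have hae : ∀ᵐ x ∂(volume.restrict (Set.Ioc (0:ℝ) 1)), x ∈ Set.Ioo (0:ℝ) 1 := by
    rw [← hrestr]
    exact ae_restrict_mem measurableSet_Ioo
  have haeeq : (fun x => q * x ^ (q-1) * F x)
      =ᵐ[volume.restrict (Set.Ioc (0:ℝ) 1)] (fun x => c * (Ψ x).toReal) := by
    filter_upwards [hae] with x hx
    exact hΦΨ x hx
  have hΨtot : ∫⁻ x in Set.Ioc (0:ℝ) 1, Ψ x = Blint * Ilint := by
    rw [← hrestr]
    rw [← hWint]
    rw [← lintegral_indicator measurableSet_Ioo]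
    apply lintegral_congr
    intro x
    by_cases hx : x ∈ Set.Ioo (0:ℝ) 1
    · rw [Set.indicator_of_mem hx]
    · rw [Set.indicator_of_notMem hx, hΨ_def]
      simp only
      exact ((lintegral_congr (fun ξ => hsec0 x hx ξ)).trans lintegral_zero).symm
  have hψint : Integrable (fun x => c * (Ψ x).toReal)
      (volume.restrict (Set.Ioc (0:ℝ) 1)) := by
    constructor
    · exact ((hΨm.ennreal_toReal).const_mul c).aestronglyMeasurable
    · rw [hasFiniteIntegral_iff_ofReal (ae_of_all _ (fun x => by positivity))]
      calc ∫⁻ x in Set.Ioc (0:ℝ) 1, ENNReal.ofReal (c * (Ψ x).toReal)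
          ≤ ∫⁻ x in Set.Ioc (0:ℝ) 1, ENNReal.ofReal c * Ψ x := by
            refine lintegral_mono (fun x => ?_)
            rw [ENNReal.ofReal_mul hc.le]
            exact mul_le_mul_right ENNReal.ofReal_toReal_le _
        _ = ENNReal.ofReal c * (Blint * Ilint) := by
            rw [lintegral_const_mul' _ _ ENNReal.ofReal_ne_top, hΨtot]
        _ < ⊤ := ENNReal.mul_lt_top ENNReal.ofReal_lt_top
            (ENNReal.mul_lt_top hBlt hIlt)
  have hΦint : IntegrableOn (fun x : ℝ => q * x ^ (q - 1) * F x) (Set.Ioc 0 1) :=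
    hψint.congr haeeq.symm
  refine ⟨hΦint, ?_⟩
  have hval : ∫ x in Set.Ioc (0:ℝ) 1, q * x ^ (q-1) * F x
      = c * (Blint * Ilint).toReal := by
    rw [integral_congr_ae haeeq, integral_const_mul, ← hΨtot]
    congr 1
    apply integral_toReal hΨm.aemeasurable
    exact ae_lt_top hΨm (by rw [hΨtot]; exact (ENNReal.mul_lt_top hBlt hIlt).ne)
  have hIeq : ∫ x in Set.Ioo (0:ℝ) 1, q * x ^ (q-1) * fa α x = Ilint.toReal := by
    rw [hIlint_def]
    apply integral_eq_lintegral_of_nonneg_ae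
    · rw [Filter.EventuallyLE, ae_restrict_iff' measurableSet_Ioo]
      refine ae_of_all _ (fun x hx => ?_)
      exact mul_nonneg (mul_nonneg hq0.le (Real.rpow_nonneg hx.1.le _)) (fa_nonneg α hα x)
    · exact ((hcontq.measurable.const_mul q).mul hmf).aestronglyMeasurable
  have hBeq : Blint.toReal
      = Real.Gamma (q-α+1) * Real.sqrt Real.pi / Real.Gamma (q-α+3/2) := by
    have hconts : Continuous fun y : ℝ => y ^ (q-α) :=
      continuous_iff_continuousAt.2
        (fun x => Real.continuousAt_rpow_const x (q-α) (Or.inr hs.le))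
    have hmeas : AEStronglyMeasurable (fun ξ : ℝ => ξ ^ (q-α) * (1-ξ) ^ (-(1:ℝ)/2))
        (volume.restrict (Set.Ioo (0:ℝ) 1)) := by
      apply AEStronglyMeasurable.congr
        (f := fun ξ : ℝ => ξ ^ (q-α) * (Real.sqrt (1-ξ))⁻¹)
      · exact (hconts.measurable.mul
          ((Real.continuous_sqrt.measurable.comp (measurable_const.sub measurable_id)).inv)
          ).aestronglyMeasurable
      · rw [Filter.EventuallyEq, ae_restrict_iff' measurableSet_Ioo]
        refine ae_of_all _ (fun ξ hξ => ?_)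
        rw [Real.sqrt_eq_rpow, show (-(1:ℝ)/2) = -((1:ℝ)/2) by norm_num,
          Real.rpow_neg (by linarith [hξ.2] : (0:ℝ) ≤ 1 - ξ)]
    have h0 : 0 ≤ᵐ[volume.restrict (Set.Ioo (0:ℝ) 1)]
        (fun ξ : ℝ => ξ ^ (q-α) * (1-ξ) ^ (-(1:ℝ)/2)) := by
      rw [Filter.EventuallyLE, ae_restrict_iff' measurableSet_Ioo]
      refine ae_of_all _ (fun ξ hξ => ?_)
      exact mul_nonneg (Real.rpow_nonneg hξ.1.le _)
        (Real.rpow_nonneg (by linarith [hξ.2]) _)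
    have h1 := integral_eq_lintegral_of_nonneg_ae h0 hmeas
    rw [hBlint_def, ← h1, beta_eval hs]
  have hsc : 2 * c * Real.sqrt Real.pi = Real.sqrt (2/μ) := by
    have hsqrt_pos : 0 < Real.sqrt (2 * Real.pi * μ) := Real.sqrt_pos.2 hπμ
    have key : Real.sqrt (2/μ) * Real.sqrt (2*Real.pi*μ) = 2 * Real.sqrt Real.pi := by
      rw [← Real.sqrt_mul (by positivity) _]
      rw [show (2/μ) * (2*Real.pi*μ) = 2^2 * Real.pi by field_simp]
      rw [Real.sqrt_mul (by positivity), Real.sqrt_sq (by norm_num)]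
    have h2 : Real.sqrt (2/μ) = 2 * Real.sqrt Real.pi / Real.sqrt (2*Real.pi*μ) := by
      rw [eq_div_iff hsqrt_pos.ne']
      exact key
    rw [h2, hc_def]
    field_simp
  rw [hval, hIeq, ENNReal.toReal_mul, hBeq]
  rw [← hsc]
  ring
end
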